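/- The functions B and A, defined on [1,∞) by B(ρ) := √(ρ²/2 + (ρ/2)·√(ρ²+8) − 2) and A(ρ) := B(ρ)/ρ, are continuous, strictly concave and strictly increasing, with A(1) = B(1) = 0, lim_{ρ→1⁺} A(ρ)/√(ρ−1) = √(8/3), and lim_{ρ→∞} A(ρ) = 1. In particular, 0 < A(ρ) < 1 and ρ − 1 < B(ρ) < ρ for every ρ ∈ (1,∞). -/

import Mathlib

open Filter Topology

noncomputable section

/-- The function `B(ρ) = √(ρ²/2 + (ρ/2)√(ρ²+8) − 2)`. -/
def Bfn (ρ : ℝ) : ℝ := Real.sqrt (ρ ^ 2 / 2 + ρ / 2 * Real.sqrt (ρ ^ 2 + 8) - 2)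

/-- The function `A(ρ) = B(ρ)/ρ`. -/
def Afn (ρ : ℝ) : ℝ := Bfn ρ / ρ

namespace ABaux

def Sf (x : ℝ) : ℝ := Real.sqrt (x ^ 2 + 8)
def Gf (x : ℝ) : ℝ := x ^ 2 / 2 + x / 2 * Sf x - 2
def Gp (x : ℝ) : ℝ := x + Sf x / 2 + x ^ 2 / (2 * Sf x)
def Gpp (x : ℝ) : ℝ := (2 * Sf x ^ 3 + 3 * x * Sf x ^ 2 - x ^ 3) / (2 * Sf x ^ 3)

lemma Sf_pos (x : ℝ) : 0 < Sf x := Real.sqrt_pos.2 (by positivity)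

lemma Sf_sq (x : ℝ) : Sf x ^ 2 = x ^ 2 + 8 := Real.sq_sqrt (by positivity)

lemma Sf_gt (x : ℝ) (hx : 0 ≤ x) : x < Sf x := by
  nlinarith [Sf_sq x, Sf_pos x]

lemma Sf_ge3 (x : ℝ) (hx : 1 ≤ x) : 3 ≤ Sf x := by
  nlinarith [Sf_sq x, Sf_pos x]

lemma Sf_le (x : ℝ) (hx : 1 ≤ x) : Sf x ≤ 3 * x := by
  nlinarith [Sf_sq x, Sf_pos x]

lemma Bfn_eq (x : ℝ) : Bfn x = Real.sqrt (Gf x) := rfl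

lemma Gf_nonneg (x : ℝ) (hx : 1 ≤ x) : 0 ≤ Gf x := by
  have := Sf_ge3 x hx
  unfold Gf
  nlinarith

lemma Gf_pos (x : ℝ) (hx : 1 < x) : 0 < Gf x := by
  have := Sf_ge3 x hx.le
  unfold Gf
  nlinarith

lemma Bfn_pos (x : ℝ) (hx : 1 < x) : 0 < Bfn x :=
  Real.sqrt_pos.2 (Gf_pos x hx)

lemma Bfn_sq (x : ℝ) (hx : 1 ≤ x) : Bfn x ^ 2 = Gf x :=
  Real.sq_sqrt (Gf_nonneg x hx)

lemma Gp_pos (x : ℝ) (hx : 1 ≤ x) : 0 < Gp x := by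
  have h := Sf_pos x
  unfold Gp
  positivity

lemma hasDerivAt_Sf (x : ℝ) : HasDerivAt Sf (x / Sf x) x := by
  have h1 : HasDerivAt (fun y : ℝ => y ^ 2 + 8) (2 * x) x := by
    simpa using ((hasDerivAt_pow 2 x).add_const 8)
  have h2 := (Real.hasDerivAt_sqrt (show x ^ 2 + 8 ≠ 0 by positivity)).comp x h1
  refine h2.congr_deriv ?_
  symm
  have := Sf_pos x
  unfold Sf
  field_simp

lemma hasDerivAt_Gf (x : ℝ) : HasDerivAt Gf (Gp x) x := by
  have hs := Sf_pos x
  have h1 : HasDerivAt (fun y : ℝ => y ^ 2 / 2) x x := by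
    simpa using ((hasDerivAt_pow 2 x).div_const 2)
  have h2 : HasDerivAt (fun y : ℝ => y / 2 * Sf y) ((1:ℝ)/2 * Sf x + x / 2 * (x / Sf x)) x :=
    ((hasDerivAt_id x).div_const 2).mul (hasDerivAt_Sf x)
  have h3 := (h1.add h2).sub_const 2
  refine h3.congr_deriv ?_
  symm
  unfold Gp
  field_simp
  ring

lemma hasDerivAt_Gp (x : ℝ) : HasDerivAt Gp (Gpp x) x := by
  have hs := Sf_pos x
  have h1 : HasDerivAt (fun y : ℝ => Sf y / 2) (x / Sf x / 2) x := (hasDerivAt_Sf x).div_const 2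
  have h2 : HasDerivAt (fun y : ℝ => y ^ 2 / (2 * Sf y))
      ((2 * x * (2 * Sf x) - x ^ 2 * (2 * (x / Sf x))) / (2 * Sf x) ^ 2) x := by
    have hnum : HasDerivAt (fun y : ℝ => y ^ 2) (2 * x) x := by simpa using hasDerivAt_pow 2 x
    have hden : HasDerivAt (fun y : ℝ => 2 * Sf y) (2 * (x / Sf x)) x := (hasDerivAt_Sf x).const_mul 2
    exact hnum.div hden (by positivity)
  have h3 := ((hasDerivAt_id x).add h1).add h2
  refine h3.congr_deriv ?_
  symm
  unfold Gpp
  field_simp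
  ring

lemma hasDerivAt_Bfn (x : ℝ) (hx : 1 < x) : HasDerivAt Bfn (Gp x / (2 * Bfn x)) x := by
  have hG := Gf_pos x hx
  have h := (Real.hasDerivAt_sqrt (ne_of_gt hG)).comp x (hasDerivAt_Gf x)
  refine h.congr_deriv ?_
  symm
  rw [Bfn_eq]
  ring

lemma hasDerivAt_Afn (x : ℝ) (hx : 1 < x) :
    HasDerivAt Afn ((Gp x / (2 * Bfn x) * x - Bfn x) / x ^ 2) x := by
  have h := (hasDerivAt_Bfn x hx).div (hasDerivAt_id' (x := x)) (by linarith)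
  refine h.congr_deriv ?_
  symm
  ring

lemma hasDerivAt_B1 (x : ℝ) (hx : 1 < x) :
    HasDerivAt (fun y => Gp y / (2 * Bfn y))
      ((Gpp x * (2 * Bfn x) - Gp x * (2 * (Gp x / (2 * Bfn x)))) / (2 * Bfn x) ^ 2) x := by
  have hB := Bfn_pos x hx
  exact (hasDerivAt_Gp x).div ((hasDerivAt_Bfn x hx).const_mul 2) (by positivity)

lemma numB_neg (x : ℝ) (hx : 1 < x) : 2 * Gpp x * Gf x - Gp x ^ 2 < 0 := by
  have hs0 := Sf_pos x
  have hs := Sf_sq x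
  have hx0 : (0:ℝ) < x := by linarith
  have h2 : 2 * Gpp x * Gf x - Gp x ^ 2
      = -(((x + Sf x) ^ 4 * Sf x ^ 2
          - 2 * Sf x * (2 * Sf x ^ 3 + 3 * x * Sf x ^ 2 - x ^ 3) * (x ^ 2 + x * Sf x - 4))
          / (4 * Sf x ^ 4)) := by
    unfold Gpp Gp Gf
    field_simp
    ring
  have h3 : (x + Sf x) ^ 4 * Sf x ^ 2
      - 2 * Sf x * (2 * Sf x ^ 3 + 3 * x * Sf x ^ 2 - x ^ 3) * (x ^ 2 + x * Sf x - 4)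
      = 192 * x ^ 2 + 1536 + 192 * x * Sf x := by
    linear_combination (192 + 24 * Sf x ^ 2 + Sf x ^ 4 + 24 * x * Sf x
      - 3 * x ^ 2 * Sf x ^ 2 - 2 * x ^ 3 * Sf x) * hs
  rw [h2, h3]
  have : (0:ℝ) < 192 * x ^ 2 + 1536 + 192 * x * Sf x := by positivity
  have h4 : (0:ℝ) < 4 * Sf x ^ 4 := by positivity
  exact neg_neg_iff_pos.mpr (div_pos this h4)

lemma derivB2_neg (x : ℝ) (hx : 1 < x) :
    (Gpp x * (2 * Bfn x) - Gp x * (2 * (Gp x / (2 * Bfn x)))) / (2 * Bfn x) ^ 2 < 0 := by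
  have hB := Bfn_pos x hx
  have hb2 := Bfn_sq x hx.le
  have h1 : Gpp x * (2 * Bfn x) - Gp x * (2 * (Gp x / (2 * Bfn x)))
      = (2 * Gpp x * Bfn x ^ 2 - Gp x ^ 2) / Bfn x := by
    field_simp
  rw [h1, hb2]
  exact div_neg_of_neg_of_pos
    (div_neg_of_neg_of_pos (numB_neg x hx) hB) (by positivity)

lemma hasDerivAt_A1 (x : ℝ) (hx : 1 < x) :
    HasDerivAt (fun y => (Gp y / (2 * Bfn y) * y - Bfn y) / y ^ 2)
      (((2 * Gpp x * Gf x - Gp x ^ 2) * x ^ 2 - 4 * Gf x * (Gp x * x - 2 * Gf x))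
        / (4 * Bfn x ^ 3 * x ^ 3)) x := by
  have hB := Bfn_pos x hx
  have hb2 := Bfn_sq x hx.le
  have hx0 : (0:ℝ) < x := by linarith
  have hnum : HasDerivAt (fun y => Gp y / (2 * Bfn y) * y - Bfn y)
      (((Gpp x * (2 * Bfn x) - Gp x * (2 * (Gp x / (2 * Bfn x)))) / (2 * Bfn x) ^ 2) * x
        + Gp x / (2 * Bfn x) * 1 - Gp x / (2 * Bfn x)) x :=
    ((hasDerivAt_B1 x hx).mul (hasDerivAt_id' (x := x))).sub (hasDerivAt_Bfn x hx)
  have h := hnum.div (hasDerivAt_pow 2 x) (by positivity)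
  refine h.congr_deriv ?_
  symm
  rw [← hb2]
  push_cast
  field_simp
  ring

lemma numA_neg (x : ℝ) (hx : 1 < x) :
    (2 * Gpp x * Gf x - Gp x ^ 2) * x ^ 2 - 4 * Gf x * (Gp x * x - 2 * Gf x) < 0 := by
  have hs0 := Sf_pos x
  have hs := Sf_sq x
  have hx0 : (0:ℝ) < x := by linarith
  have h2 : (2 * Gpp x * Gf x - Gp x ^ 2) * x ^ 2 - 4 * Gf x * (Gp x * x - 2 * Gf x)
      = (2 * x ^ 2 * (2 * Sf x ^ 3 + 3 * x * Sf x ^ 2 - x ^ 3) * (x ^ 2 + x * Sf x - 4)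
         - x ^ 2 * (x + Sf x) ^ 4 * Sf x
         - 4 * x * Sf x ^ 2 * (x ^ 2 + x * Sf x - 4) * (x + Sf x) ^ 2
         + 8 * Sf x ^ 3 * (x ^ 2 + x * Sf x - 4) ^ 2) / (4 * Sf x ^ 3) := by
    unfold Gpp Gp Gf
    field_simp
    ring
  have h3 : 2 * x ^ 2 * (2 * Sf x ^ 3 + 3 * x * Sf x ^ 2 - x ^ 3) * (x ^ 2 + x * Sf x - 4)
         - x ^ 2 * (x + Sf x) ^ 4 * Sf x
         - 4 * x * Sf x ^ 2 * (x ^ 2 + x * Sf x - 4) * (x + Sf x) ^ 2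
         + 8 * Sf x ^ 3 * (x ^ 2 + x * Sf x - 4) ^ 2
      = 1024 * Sf x - 3072 * x - 64 * x ^ 2 * Sf x - 576 * x ^ 3 := by
    linear_combination (128 * Sf x - 384 * x - 48 * x * Sf x ^ 2 - 24 * x ^ 2 * Sf x
      + 3 * x ^ 2 * Sf x ^ 3 - 24 * x ^ 3 + 4 * x ^ 3 * Sf x ^ 2 + 3 * x ^ 4 * Sf x
      + 2 * x ^ 5) * hs
  rw [h2, h3]
  apply div_neg_of_neg_of_pos _ (by positivity)
  nlinarith [Sf_le x hx.le, mul_pos (mul_pos hx0 hx0) hs0]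

lemma deriv2_Bfn_neg (x : ℝ) (hx : 1 < x) : deriv^[2] Bfn x < 0 := by
  have hev : deriv Bfn =ᶠ[nhds x] fun y => Gp y / (2 * Bfn y) := by
    filter_upwards [isOpen_Ioi.mem_nhds (show x ∈ Set.Ioi (1:ℝ) from hx)] with y hy
    exact (hasDerivAt_Bfn y hy).deriv
  have h2 : deriv^[2] Bfn x = deriv (fun y => Gp y / (2 * Bfn y)) x := by
    show deriv (deriv Bfn) x = _
    exact hev.deriv_eq
  rw [h2, (hasDerivAt_B1 x hx).deriv]
  exact derivB2_neg x hx

lemma deriv2_Afn_neg (x : ℝ) (hx : 1 < x) : deriv^[2] Afn x < 0 := by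
  have hB := Bfn_pos x hx
  have hx0 : (0:ℝ) < x := by linarith
  have hev : deriv Afn =ᶠ[nhds x] fun y => (Gp y / (2 * Bfn y) * y - Bfn y) / y ^ 2 := by
    filter_upwards [isOpen_Ioi.mem_nhds (show x ∈ Set.Ioi (1:ℝ) from hx)] with y hy
    exact (hasDerivAt_Afn y hy).deriv
  have h2 : deriv^[2] Afn x = deriv (fun y => (Gp y / (2 * Bfn y) * y - Bfn y) / y ^ 2) x := by
    show deriv (deriv Afn) x = _
    exact hev.deriv_eq
  rw [h2, (hasDerivAt_A1 x hx).deriv]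
  exact div_neg_of_neg_of_pos (numA_neg x hx) (by positivity)

lemma derivA_pos (x : ℝ) (hx : 1 < x) : 0 < (Gp x / (2 * Bfn x) * x - Bfn x) / x ^ 2 := by
  have hB := Bfn_pos x hx
  have hb2 := Bfn_sq x hx.le
  have hs0 := Sf_pos x
  have hs := Sf_sq x
  have hx0 : (0:ℝ) < x := by linarith
  apply div_pos _ (by positivity)
  have h1 : Gp x / (2 * Bfn x) * x - Bfn x = (Gp x * x - 2 * Bfn x ^ 2) / (2 * Bfn x) := by
    field_simp
  rw [h1, hb2]
  apply div_pos _ (by positivity)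
  have h2 : Gp x * x - 2 * Gf x = (x ^ 3 - x * Sf x ^ 2 + 8 * Sf x) / (2 * Sf x) := by
    unfold Gp Gf
    field_simp
    ring
  rw [h2]
  apply div_pos _ (by positivity)
  nlinarith [Sf_gt x (by linarith : (0:ℝ) ≤ x)]

lemma continuous_Bfn : Continuous Bfn := by
  unfold Bfn
  fun_prop

lemma contB : ContinuousOn Bfn (Set.Ici 1) := continuous_Bfn.continuousOn

lemma contA : ContinuousOn Afn (Set.Ici 1) := by
  apply ContinuousOn.div continuous_Bfn.continuousOn continuousOn_id
  intro x hx
  have : (1:ℝ) ≤ x := hx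
  simp only [Set.mem_Ici, id] at *
  linarith

lemma concaveB : StrictConcaveOn ℝ (Set.Ici 1) Bfn := by
  apply strictConcaveOn_of_deriv2_neg (convex_Ici 1) contB
  intro x hx
  rw [interior_Ici] at hx
  exact deriv2_Bfn_neg x hx

lemma concaveA : StrictConcaveOn ℝ (Set.Ici 1) Afn := by
  apply strictConcaveOn_of_deriv2_neg (convex_Ici 1) contA
  intro x hx
  rw [interior_Ici] at hx
  exact deriv2_Afn_neg x hx

lemma monoB : StrictMonoOn Bfn (Set.Ici 1) := by
  apply strictMonoOn_of_deriv_pos (convex_Ici 1) contB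
  intro x hx
  rw [interior_Ici] at hx
  rw [(hasDerivAt_Bfn x hx).deriv]
  have h1 := Gp_pos x hx.le
  have h2 := Bfn_pos x hx
  positivity

lemma monoA : StrictMonoOn Afn (Set.Ici 1) := by
  apply strictMonoOn_of_deriv_pos (convex_Ici 1) contA
  intro x hx
  rw [interior_Ici] at hx
  rw [(hasDerivAt_Afn x hx).deriv]
  exact derivA_pos x hx

lemma Sf_one : Sf 1 = 3 := by
  unfold Sf
  rw [show (1:ℝ) ^ 2 + 8 = 3 ^ 2 by norm_num, Real.sqrt_sq (by norm_num : (0:ℝ) ≤ 3)]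

lemma Gf_one : Gf 1 = 0 := by
  unfold Gf
  rw [Sf_one]
  norm_num

lemma Bfn_one : Bfn 1 = 0 := by
  rw [Bfn_eq, Gf_one, Real.sqrt_zero]

lemma Afn_one : Afn 1 = 0 := by
  unfold Afn
  rw [Bfn_one]
  norm_num

lemma Bfn_lt (x : ℝ) (hx : 1 < x) : Bfn x < x := by
  have hs0 := Sf_pos x
  have hs := Sf_sq x
  have hx0 : (0:ℝ) < x := by linarith
  rw [Bfn_eq, Real.sqrt_lt' hx0]
  unfold Gf
  nlinarith [sq_nonneg (x * Sf x - x ^ 2 - 4), mul_pos hx0 hs0]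

lemma Bfn_gt (x : ℝ) (hx : 1 < x) : x - 1 < Bfn x := by
  have hs0 := Sf_pos x
  have hs := Sf_sq x
  have hx0 : (0:ℝ) < x := by linarith
  rw [Bfn_eq]
  have h1 : (0:ℝ) < 2 * x ^ 2 - 3 * x + 9 := by nlinarith [sq_nonneg (x - 1)]
  have h2 : (0:ℝ) < x ^ 2 - 4 * x + 6 := by nlinarith [sq_nonneg (x - 2)]
  have h3 : 0 < x * Sf x := mul_pos hx0 hs0
  have key : x ^ 2 - 4 * x + 6 < x * Sf x := by
    nlinarith [mul_pos (show (0:ℝ) < x - 1 by linarith) h1]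
  rw [Real.lt_sqrt (by linarith : (0:ℝ) ≤ x - 1)]
  unfold Gf
  nlinarith

lemma tendsto_Afn_atTop : Tendsto Afn atTop (nhds 1) := by
  have hev : (fun x => Real.sqrt (1/2 + Real.sqrt (1 + 8/x^2)/2 - 2/x^2)) =ᶠ[atTop] Afn := by
    filter_upwards [eventually_ge_atTop (1:ℝ)] with x hx
    have hx0 : (0:ℝ) < x := by linarith
    have hSx : Real.sqrt (1 + 8/x^2) = Sf x / x := by
      rw [show 1 + 8/x^2 = (x^2+8)/x^2 by field_simp, Real.sqrt_div (by positivity) _,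
        Real.sqrt_sq hx0.le]
      rfl
    have h2 : 1/2 + Real.sqrt (1 + 8/x^2)/2 - 2/x^2 = Gf x / x^2 := by
      rw [hSx]
      unfold Gf
      field_simp
    rw [h2, Real.sqrt_div (Gf_nonneg x hx) _, Real.sqrt_sq hx0.le]
    rfl
  have h0 : Tendsto (fun x:ℝ => 8/x^2) atTop (nhds 0) :=
    Tendsto.div_atTop tendsto_const_nhds (tendsto_pow_atTop (by norm_num))
  have h1 : Tendsto (fun x:ℝ => 2/x^2) atTop (nhds 0) :=
    Tendsto.div_atTop tendsto_const_nhds (tendsto_pow_atTop (by norm_num))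
  have h2 := ((((tendsto_const_nhds (x := (1:ℝ))).add h0).sqrt.div_const 2).const_add
      (1/2)).sub h1
  have h3 := h2.sqrt
  have h5 : Real.sqrt ((1:ℝ)/2 + Real.sqrt (1 + 0)/2 - 0) = 1 := by
    rw [show (1:ℝ) + 0 = 1 by norm_num, Real.sqrt_one]
    norm_num
  rw [h5] at h3
  exact Filter.Tendsto.congr' hev h3

lemma tendsto_Afn_one :
    Tendsto (fun ρ => Afn ρ / Real.sqrt (ρ - 1)) (nhdsWithin 1 (Set.Ioi 1))
      (nhds (Real.sqrt (8 / 3))) := by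
  have hS : Continuous Sf := by unfold Sf; fun_prop
  have hden : ContinuousAt (fun x : ℝ => x * Sf x + 4 - x^2) 1 := by fun_prop
  have hdenne : (1:ℝ) * Sf 1 + 4 - 1^2 ≠ 0 := by rw [Sf_one]; norm_num
  have hnum : ContinuousAt (fun x : ℝ => 8*(x+1)/(x * Sf x + 4 - x^2)) 1 :=
    ContinuousAt.div (by fun_prop) hden hdenne
  have hc : ContinuousAt (fun x : ℝ => Real.sqrt (8*(x+1)/(x * Sf x + 4 - x^2)) / x) 1 :=
    hnum.sqrt.div continuousAt_id (by norm_num)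
  have ht : Tendsto (fun x : ℝ => Real.sqrt (8*(x+1)/(x * Sf x + 4 - x^2)) / x)
      (nhdsWithin 1 (Set.Ioi 1))
      (nhds (Real.sqrt (8*((1:ℝ)+1)/(1 * Sf 1 + 4 - 1^2)) / 1)) :=
    hc.continuousWithinAt.tendsto
  have hval : Real.sqrt (8*((1:ℝ)+1)/(1 * Sf 1 + 4 - 1^2)) / 1 = Real.sqrt (8/3) := by
    rw [Sf_one]
    norm_num
  rw [hval] at ht
  apply tendsto_nhdsWithin_congr _ ht
  intro x hx
  have hx1 : (1:ℝ) < x := hx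
  have hx0 : (0:ℝ) < x := by linarith
  have hs0 := Sf_pos x
  have hs := Sf_sq x
  have hden2 : (0:ℝ) < x * Sf x + 4 - x^2 := by nlinarith [Sf_gt x hx0.le]
  have hquot : 8*(x+1)/(x * Sf x + 4 - x^2) = Gf x / (x-1) := by
    rw [div_eq_div_iff (by linarith) (by linarith)]
    unfold Gf
    linear_combination (-(x^2/2)) * hs
  show Real.sqrt (8*(x+1)/(x * Sf x + 4 - x^2)) / x = Afn x / Real.sqrt (x - 1)
  rw [hquot, Real.sqrt_div (Gf_nonneg x hx1.le) _]
  show Real.sqrt (Gf x) / Real.sqrt (x-1) / x = Afn x / Real.sqrt (x - 1)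
  rw [show Afn x = Real.sqrt (Gf x) / x from rfl]
  ring

end ABaux

theorem A_and_B_properties :
    ContinuousOn Bfn (Set.Ici 1) ∧ ContinuousOn Afn (Set.Ici 1) ∧
      StrictConcaveOn ℝ (Set.Ici 1) Bfn ∧ StrictConcaveOn ℝ (Set.Ici 1) Afn ∧
      StrictMonoOn Bfn (Set.Ici 1) ∧ StrictMonoOn Afn (Set.Ici 1) ∧
      Afn 1 = 0 ∧ Bfn 1 = 0 ∧
      Filter.Tendsto (fun ρ => Afn ρ / Real.sqrt (ρ - 1)) (nhdsWithin 1 (Set.Ioi 1))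
        (nhds (Real.sqrt (8 / 3))) ∧
      Filter.Tendsto Afn Filter.atTop (nhds 1) ∧
      ∀ ρ : ℝ, 1 < ρ → 0 < Afn ρ ∧ Afn ρ < 1 ∧ ρ - 1 < Bfn ρ ∧ Bfn ρ < ρ := by
  refine ⟨ABaux.contB, ABaux.contA, ABaux.concaveB, ABaux.concaveA, ABaux.monoB,
    ABaux.monoA, ABaux.Afn_one, ABaux.Bfn_one, ABaux.tendsto_Afn_one,
    ABaux.tendsto_Afn_atTop, ?_⟩
  intro ρ hρ
  have h1 := ABaux.Bfn_pos ρ hρ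
  have h2 := ABaux.Bfn_lt ρ hρ
  have h3 := ABaux.Bfn_gt ρ hρ
  have hρ0 : (0:ℝ) < ρ := by linarith
  exact ⟨div_pos h1 hρ0, (div_lt_one hρ0).2 h2, h3, h2⟩
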